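/- Fix a finite set 𝔯 of resources. Let (A, ρ) be a finite resource alphabet with involution, let A_s ⊆ {a ∈ A : ā = a} be a set of self-involuting letters, and let A' = (A ∖ A_s) ∪ {a₊, a₋ : a ∈ A_s} be the alphabet obtained by replacing each a ∈ A_s by two fresh letters a₊, a₋ with ρ(a₊) = ρ(a₋) = ρ(a) and involution ā₊ = a₋, ā₋ = a₊ (and the involution and ρ unchanged on A ∖ A_s). Let ι : M(A, ρ) → M(A', ρ) be the monoid homomorphism determined by ι(a) = a₊a₋ for a ∈ A_s and ι(b) = b for b ∈ A ∖ A_s, and let η : M(A', ρ) → M(A, ρ) be the monoid homomorphism determined by η(a₊) = a, η(a₋) = 1 for a ∈ A_s and η(b) = b otherwise. Then ι and η are well defined on the trace monoids, ι is a morphism of monoids with involution, η ∘ ι is the identity on M(A, ρ), and consequently ι is injective. -/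

import Mathlib

open scoped Classical

universe u

/-- The partial-commutation relation on words: `ab = ba` whenever `ρ a ∩ ρ b = ∅`. -/
def traceRel {R : Type u} (Γ : Type u) (ρ : Γ → Set R) :
    FreeMonoid Γ → FreeMonoid Γ → Prop := fun u v =>
  ∃ a b : Γ, ρ a ∩ ρ b = ∅ ∧ u = FreeMonoid.of a * FreeMonoid.of b ∧
    v = FreeMonoid.of b * FreeMonoid.of a

/-- The congruence on the free monoid generated by partial commutation. -/
def traceCon {R : Type u} (Γ : Type u) (ρ : Γ → Set R) : Con (FreeMonoid Γ) :=
  conGen (traceRel Γ ρ)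

/-- The trace monoid `M(Γ, ρ)`. -/
abbrev Trace {R : Type u} (Γ : Type u) (ρ : Γ → Set R) : Type u :=
  (traceCon Γ ρ).Quotient

/-- Canonical projection from words to traces. -/
def traceMk {R Γ : Type u} (ρ : Γ → Set R) : FreeMonoid Γ →* Trace Γ ρ :=
  (traceCon Γ ρ).mk'

/-- The trace of a single letter. -/
def traceOf {R Γ : Type u} (ρ : Γ → Set R) (a : Γ) : Trace Γ ρ :=
  traceMk ρ (FreeMonoid.of a)

/-- Word-level involution: reverse the word and apply `bar` letterwise. -/
def wordStar {Γ : Type u} (bar : Γ → Γ) (u : FreeMonoid Γ) : FreeMonoid Γ :=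
  FreeMonoid.ofList (((FreeMonoid.toList u).map bar).reverse)

/-- The alphabet `A' = (A ∖ A_s) ∪ {a₊, a₋ : a ∈ A_s}`: a letter is either a
non-self-involuting letter of `A`, or a pair of a letter of `A_s` with a sign
(`true` = `+`, `false` = `-`). -/
def APlus (A : Type u) (A_s : Set A) : Type u :=
  {b : A // b ∉ A_s} ⊕ ({a : A // a ∈ A_s} × Bool)

/-- The resource function on `A'`: `ρ(a₊) = ρ(a₋) = ρ(a)`, unchanged on `A ∖ A_s`. -/
def rhoPlus {R A : Type u} (ρ : A → Set R) (A_s : Set A) : APlus A A_s → Set R :=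
  Sum.elim (fun b => ρ b.1) (fun p => ρ p.1.1)

/-- The involution on `A'`: `ā₊ = a₋`, `ā₋ = a₊`, and `bar` on `A ∖ A_s`
(for letters `b ∉ A_s` one provably has `bar b ∉ A_s`, so the first branch
of the `dite` never occurs under the hypotheses of the theorem below). -/
noncomputable def barPlus {A : Type u} (bar : A → A) (A_s : Set A) : APlus A A_s → APlus A A_s :=
  Sum.elim
    (fun b => if h : bar b.1 ∈ A_s then Sum.inr (⟨bar b.1, h⟩, true)
              else Sum.inl ⟨bar b.1, h⟩)
    (fun p => Sum.inr (p.1, !p.2))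

section Aux

variable {R Γ Γ' : Type u}

theorem wordStar_mul (bar : Γ → Γ) (u v : FreeMonoid Γ) :
    wordStar bar (u * v) = wordStar bar v * wordStar bar u := by
  simp [wordStar]

theorem wordStar_of (bar : Γ → Γ) (a : Γ) :
    wordStar bar (FreeMonoid.of a) = FreeMonoid.of (bar a) := by
  simp [wordStar]

theorem traceMk_swap (ρ : Γ → Set R) {a b : Γ} (h : ρ a ∩ ρ b = ∅) :
    traceMk ρ (.of a * .of b) = traceMk ρ (.of b * .of a) :=
  (Con.eq _).2 (ConGen.Rel.of _ _ ⟨a, b, h, rfl, rfl⟩)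

theorem traceMk_cons_comm (ρ : Γ → Set R) (x : Γ) :
    ∀ (l : List Γ), (∀ y ∈ l, ρ x ∩ ρ y = ∅) →
      traceMk ρ (FreeMonoid.ofList (x :: l)) = traceMk ρ (FreeMonoid.ofList (l ++ [x]))
  | [], _ => rfl
  | y :: l, h => by
    have h1 : traceMk ρ (.of x * .of y) = traceMk ρ (.of y * .of x) :=
      traceMk_swap ρ (h y List.mem_cons_self)
    have h2 := traceMk_cons_comm ρ x l (fun z hz => h z (List.mem_cons_of_mem y hz))
    have e1 : FreeMonoid.ofList (x :: y :: l) =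
        (FreeMonoid.of x * FreeMonoid.of y) * FreeMonoid.ofList l := rfl
    have e3 : FreeMonoid.ofList (x :: l) = FreeMonoid.of x * FreeMonoid.ofList l := rfl
    calc traceMk ρ (FreeMonoid.ofList (x :: y :: l))
        = traceMk ρ (.of x * .of y) * traceMk ρ (FreeMonoid.ofList l) := by rw [e1, map_mul]
      _ = traceMk ρ (.of y * .of x) * traceMk ρ (FreeMonoid.ofList l) := by rw [h1]
      _ = traceMk ρ (.of y) * traceMk ρ (FreeMonoid.ofList (x :: l)) := by
          rw [map_mul, mul_assoc, ← map_mul, ← e3]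
      _ = traceMk ρ (.of y) * traceMk ρ (FreeMonoid.ofList (l ++ [x])) := by rw [h2]
      _ = traceMk ρ (FreeMonoid.ofList (y :: l ++ [x])) := by rw [← map_mul]; rfl

theorem traceMk_append_comm (ρ : Γ → Set R) :
    ∀ (l1 l2 : List Γ), (∀ x ∈ l1, ∀ y ∈ l2, ρ x ∩ ρ y = ∅) →
      traceMk ρ (FreeMonoid.ofList (l1 ++ l2)) = traceMk ρ (FreeMonoid.ofList (l2 ++ l1))
  | [], l2, _ => by simp
  | x :: l1, l2, h => by
    have hx : ∀ y ∈ l2, ρ x ∩ ρ y = ∅ := fun y hy => h x List.mem_cons_self y hy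
    have ih := traceMk_append_comm ρ l1 l2 (fun a ha y hy => h a (List.mem_cons_of_mem x ha) y hy)
    calc traceMk ρ (FreeMonoid.ofList (x :: l1 ++ l2))
        = traceMk ρ (.of x) * traceMk ρ (FreeMonoid.ofList (l1 ++ l2)) := by rw [← map_mul]; rfl
      _ = traceMk ρ (.of x) * traceMk ρ (FreeMonoid.ofList (l2 ++ l1)) := by rw [ih]
      _ = traceMk ρ (FreeMonoid.ofList (x :: l2)) * traceMk ρ (FreeMonoid.ofList l1) := by
          rw [← map_mul, ← map_mul]; rfl
      _ = traceMk ρ (FreeMonoid.ofList (l2 ++ [x])) * traceMk ρ (FreeMonoid.ofList l1) := by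
          rw [traceMk_cons_comm ρ x l2 hx]
      _ = traceMk ρ (FreeMonoid.ofList (l2 ++ x :: l1)) := by
          rw [← map_mul, ← FreeMonoid.ofList_append, List.append_assoc]; rfl

/-- Lift a letter-to-word substitution to trace monoids, provided each
substituted letter keeps the resources of the original. -/
noncomputable def traceLift (ρ : Γ → Set R) (ρ' : Γ' → Set R) (φ : Γ → FreeMonoid Γ')
    (hφ : ∀ a, ∀ x ∈ FreeMonoid.toList (φ a), ρ' x = ρ a) :
    Trace Γ ρ →* Trace Γ' ρ' :=
  Con.lift _ ((traceMk ρ').comp (FreeMonoid.lift φ)) (by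
    refine Con.conGen_le.2 fun u v huv => ?_
    obtain ⟨a, b, hd, rfl, rfl⟩ := huv
    show traceMk ρ' (FreeMonoid.lift φ (.of a * .of b)) =
      traceMk ρ' (FreeMonoid.lift φ (.of b * .of a))
    have e2 : ∀ c d : Γ, FreeMonoid.lift φ (.of c * .of d) =
        FreeMonoid.ofList (FreeMonoid.toList (φ c) ++ FreeMonoid.toList (φ d)) := by
      intro c d
      rw [map_mul, FreeMonoid.lift_eval_of, FreeMonoid.lift_eval_of]
      simp
    rw [e2, e2]
    exact traceMk_append_comm ρ' _ _ (fun x hx y hy => by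
      rw [hφ a x hx, hφ b y hy]; exact hd))

theorem traceLift_mk (ρ : Γ → Set R) (ρ' : Γ' → Set R) (φ : Γ → FreeMonoid Γ')
    (hφ : ∀ a, ∀ x ∈ FreeMonoid.toList (φ a), ρ' x = ρ a) (u : FreeMonoid Γ) :
    traceLift ρ ρ' φ hφ (traceMk ρ u) = traceMk ρ' (FreeMonoid.lift φ u) := rfl

theorem traceCon_star (ρ : Γ → Set R) (bar : Γ → Γ) (hb : ∀ a, ρ (bar a) = ρ a)
    {u v : FreeMonoid Γ} (h : traceCon Γ ρ u v) :
    traceCon Γ ρ (wordStar bar u) (wordStar bar v) := by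
  induction h with
  | of u v huv =>
    obtain ⟨a, b, hd, rfl, rfl⟩ := huv
    simp only [wordStar_mul, wordStar_of]
    exact ConGen.Rel.of _ _ ⟨bar b, bar a, by rw [hb, hb, Set.inter_comm]; exact hd, rfl, rfl⟩
  | refl => exact ConGen.Rel.refl _
  | symm _ ih => exact ConGen.Rel.symm ih
  | trans _ _ ih1 ih2 => exact ConGen.Rel.trans ih1 ih2
  | mul _ _ ih1 ih2 =>
    rw [wordStar_mul, wordStar_mul]
    exact ConGen.Rel.mul ih2 ih1

end Aux

/-- Eliminating self-involuting letters: the homomorphisms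
`ι : M(A,ρ) → M(A',ρ')` with `ι(a) = a₊a₋` for `a ∈ A_s` and `ι(b) = b` otherwise, and
`η : M(A',ρ') → M(A,ρ)` with `η(a₊) = a`, `η(a₋) = 1`, `η(b) = b`, are well defined on
the trace monoids; `ι` is a morphism of monoids with involution, `η ∘ ι = id`, and
consequently `ι` is injective. -/
theorem stmt_7 {R : Type u} [Fintype R] {A : Type u} [Fintype A]
    (bar : A → A) (hbar : Function.Involutive bar)
    (ρ : A → Set R) (hρ : ∀ a, ρ (bar a) = ρ a)
    (A_s : Set A) (hAs : ∀ a ∈ A_s, bar a = a) :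
    ∃ (ι : Trace A ρ →* Trace (APlus A A_s) (rhoPlus ρ A_s))
      (η : Trace (APlus A A_s) (rhoPlus ρ A_s) →* Trace A ρ),
      (∀ (a : A) (h : a ∈ A_s),
        ι (traceOf ρ a) =
          traceOf (rhoPlus ρ A_s) (Sum.inr (⟨a, h⟩, true)) *
          traceOf (rhoPlus ρ A_s) (Sum.inr (⟨a, h⟩, false))) ∧
      (∀ (a : A) (h : a ∉ A_s),
        ι (traceOf ρ a) = traceOf (rhoPlus ρ A_s) (Sum.inl ⟨a, h⟩)) ∧
      (∀ b : {b : A // b ∉ A_s},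
        η (traceOf (rhoPlus ρ A_s) (Sum.inl b)) = traceOf ρ b.1) ∧
      (∀ a : {a : A // a ∈ A_s},
        η (traceOf (rhoPlus ρ A_s) (Sum.inr (a, true))) = traceOf ρ a.1) ∧
      (∀ a : {a : A // a ∈ A_s},
        η (traceOf (rhoPlus ρ A_s) (Sum.inr (a, false))) = 1) ∧
      (∀ (u : FreeMonoid A) (w : FreeMonoid (APlus A A_s)),
        ι (traceMk ρ u) = traceMk (rhoPlus ρ A_s) w →
        ι (traceMk ρ (wordStar bar u)) =
          traceMk (rhoPlus ρ A_s) (wordStar (barPlus bar A_s) w)) ∧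
      (∀ x : Trace A ρ, η (ι x) = x) ∧
      Function.Injective ι := by
  classical
  set ρ' := rhoPlus ρ A_s with hρ'def
  -- letterwise substitutions
  set φι : A → FreeMonoid (APlus A A_s) := fun a =>
    if h : a ∈ A_s then
      FreeMonoid.of (Sum.inr (⟨a, h⟩, true)) * FreeMonoid.of (Sum.inr (⟨a, h⟩, false))
    else FreeMonoid.of (Sum.inl ⟨a, h⟩) with hφιdef
  set φη : APlus A A_s → FreeMonoid A := fun x =>
    Sum.elim (fun b => FreeMonoid.of b.1)
      (fun p => if p.2 then FreeMonoid.of p.1.1 else 1) x with hφηdef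
  have hφι : ∀ a, ∀ x ∈ FreeMonoid.toList (φι a), ρ' x = ρ a := by
    intro a x hx
    by_cases h : a ∈ A_s
    · simp only [hφιdef, dif_pos h] at hx
      have : x = Sum.inr (⟨a, h⟩, true) ∨ x = Sum.inr (⟨a, h⟩, false) := by
        have hx' : x ∈ ([Sum.inr (⟨a, h⟩, true), Sum.inr (⟨a, h⟩, false)] : List (APlus A A_s)) := hx
        exact (List.mem_cons.1 hx').imp id List.mem_singleton.1
      rcases this with rfl | rfl <;> rfl
    · simp only [hφιdef, dif_neg h] at hx
      have : x = Sum.inl ⟨a, h⟩ := by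
        have hx' : x ∈ ([Sum.inl ⟨a, h⟩] : List (APlus A A_s)) := hx
        exact List.mem_singleton.1 hx'
      subst this; rfl
  have hφη : ∀ x, ∀ y ∈ FreeMonoid.toList (φη x), ρ y = ρ' x := by
    rintro (b | ⟨a, s⟩) y hy
    · have : y = b.1 := by simpa [hφηdef] using hy
      subst this; rfl
    · cases s
      · simp [hφηdef] at hy
      · have : y = a.1 := by simpa [hφηdef] using hy
        subst this; rfl
  have hletter : ∀ a, FreeMonoid.lift φη (FreeMonoid.lift φι (.of a)) = FreeMonoid.of a := by
    intro a
    rw [FreeMonoid.lift_eval_of, hφιdef]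
    by_cases h : a ∈ A_s
    · simp only [dif_pos h, map_mul, FreeMonoid.lift_eval_of]
      show (FreeMonoid.of a : FreeMonoid A) * 1 = _
      exact mul_one _
    · simp only [dif_neg h, FreeMonoid.lift_eval_of]
      rfl
  have hword : ∀ u : FreeMonoid A, FreeMonoid.lift φη (FreeMonoid.lift φι u) = u := by
    intro u
    have : (FreeMonoid.lift φη).comp (FreeMonoid.lift φι) = MonoidHom.id _ :=
      FreeMonoid.hom_eq fun a => hletter a
    exact congrFun (congrArg (fun f => f.toFun) this) u
  have hinv : ∀ x : Trace A ρ, traceLift ρ' ρ φη hφη (traceLift ρ ρ' φι hφι x) = x := by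
    intro x
    obtain ⟨u, rfl⟩ := Con.mk'_surjective x
    show traceMk ρ (FreeMonoid.lift φη (FreeMonoid.lift φι u)) = _
    rw [hword]; rfl
  refine ⟨traceLift ρ ρ' φι hφι, traceLift ρ' ρ φη hφη, ?_, ?_, ?_, ?_, ?_, ?_, hinv,
    Function.LeftInverse.injective hinv⟩
  · intro a h
    show traceMk ρ' (FreeMonoid.lift φι (.of a)) = _
    rw [FreeMonoid.lift_eval_of, hφιdef]
    simp only [dif_pos h, map_mul]
    rfl
  · intro a h
    show traceMk ρ' (FreeMonoid.lift φι (.of a)) = _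
    rw [FreeMonoid.lift_eval_of, hφιdef]
    simp only [dif_neg h]
    rfl
  · intro b
    show traceMk ρ (FreeMonoid.lift φη (FreeMonoid.of (α := APlus A A_s) (Sum.inl b))) = _
    rfl
  · intro a
    show traceMk ρ (FreeMonoid.lift φη (FreeMonoid.of (α := APlus A A_s) (Sum.inr (a, true)))) = _
    rfl
  · intro a
    show traceMk ρ (FreeMonoid.lift φη (FreeMonoid.of (α := APlus A A_s) (Sum.inr (a, false)))) = _
    change traceMk ρ (φη (Sum.inr (a, false))) = 1
    show traceMk ρ 1 = 1
    exact map_one _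
  · -- involution compatibility
    have hbar' : ∀ b, b ∉ A_s → bar b ∉ A_s := by
      intro b hb hmem
      have hbb : b = bar b := (hbar b).symm.trans (hAs _ hmem)
      exact hb (hbb ▸ hmem)
    have rb : ∀ x, ρ' (barPlus bar A_s x) = ρ' x := by
      rintro (b | ⟨a, s⟩)
      · by_cases hm : bar b.1 ∈ A_s <;>
          simp [barPlus, hm, hρ'def, rhoPlus, hρ, APlus]
      · rfl
    have hstar_letter : ∀ a, φι (bar a) = wordStar (barPlus bar A_s) (φι a) := by
      intro a
      by_cases h : a ∈ A_s
      · conv_lhs => rw [hAs a h]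
        simp only [hφιdef, dif_pos h, wordStar_mul, wordStar_of]
        rfl
      · have h2 : bar a ∉ A_s := hbar' a h
        simp only [hφιdef, dif_neg h, dif_neg h2, wordStar_of]
        show FreeMonoid.of (Sum.inl ⟨bar a, h2⟩) =
          FreeMonoid.of (barPlus bar A_s (Sum.inl ⟨a, h⟩))
        simp [barPlus, dif_neg h2, APlus]
    have hstar : ∀ v : FreeMonoid A, FreeMonoid.lift φι (wordStar bar v) =
        wordStar (barPlus bar A_s) (FreeMonoid.lift φι v) := by
      intro v
      induction v using FreeMonoid.recOn with
      | one => simp [wordStar]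
      | of_mul x xs ih =>
        rw [wordStar_mul, map_mul, map_mul, wordStar_mul, ih, wordStar_of,
          FreeMonoid.lift_eval_of, FreeMonoid.lift_eval_of, hstar_letter]
    intro u w h
    have h' : traceMk ρ' (FreeMonoid.lift φι u) = traceMk ρ' w := h
    have hcon := (Con.eq _).1 h'
    have hcon2 := traceCon_star ρ' (barPlus bar A_s) rb hcon
    show traceMk ρ' (FreeMonoid.lift φι (wordStar bar u)) = _
    rw [hstar u]
    exact (Con.eq _).2 hcon2
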